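/- Let d_max ∈ (0,1), let X_min, X_max be reals with -1 < X_min < 0 < X_max, let N be a positive integer, and let r_f(0),...,r_f(N-1) be reals with 0 ≤ r_f(k) < X_max. Let a trading policy be given by functions u_k mapping each return history (X(0),...,X(k-1)) ∈ [X_min, X_max]^k to an investment amount, and for each return sequence define V(0) > 0 (fixed) and V(k+1) = V(k) + u_k(X(0),...,X(k-1))·X(k) + (V(k) − u_k(X(0),...,X(k-1)))·r_f(k). Then the policy guarantees d(k) ≤ d_max for all 0 ≤ k ≤ N and every return sequence in [X_min, X_max]^N if and only if for every k ≤ N−1 and every return sequence, −((M(k) + r_f(k))/(X_max − r_f(k)))·V(k) ≤ u_k(X(0),...,X(k-1)) ≤ ((M(k) + r_f(k))/(|X_min| + r_f(k)))·V(k), where d(k) = (V_max(k) − V(k))/V_max(k), V_max(k) = max_{0≤i≤k} V(i), and M(k) = (d_max − d(k))/(1 − d(k)). -/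

import Mathlib

/-- The running maximum `V_max(k) = max_{0 ≤ i ≤ k} V(i)` of the account value. -/
noncomputable def runMax (V : ℕ → ℝ) (k : ℕ) : ℝ :=
  (Finset.range (k + 1)).sup' (Finset.nonempty_range_iff.mpr k.succ_ne_zero) V

/-- The percentage drawdown `d(k) = (V_max(k) − V(k)) / V_max(k)`. -/
noncomputable def drawdown (V : ℕ → ℝ) (k : ℕ) : ℝ :=
  (runMax V k - V k) / runMax V k

/-- The modulation function `M(k) = (d_max − d(k)) / (1 − d(k))`. -/
noncomputable def modFn (dmax : ℝ) (V : ℕ → ℝ) (k : ℕ) : ℝ :=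
  (dmax - drawdown V k) / (1 - drawdown V k)

/-- The account value process generated by a causal policy
`π k : (X(0),…,X(k−1)) ↦ u(k)` along the return sequence `X`:
`V(0) = V0` and `V(k+1) = V(k) + u(k)·X(k) + (V(k) − u(k))·r_f(k)`. -/
noncomputable def wealth (V0 : ℝ) (rf : ℕ → ℝ)
    (π : (k : ℕ) → (Fin k → ℝ) → ℝ) (X : ℕ → ℝ) : ℕ → ℝ
  | 0 => V0
  | k + 1 =>
      wealth V0 rf π X k + π k (fun i => X i) * X k +
        (wealth V0 rf π X k - π k (fun i => X i)) * rf k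

lemma le_runMax (V : ℕ → ℝ) {i k : ℕ} (h : i ≤ k) : V i ≤ runMax V k :=
  Finset.le_sup' V (Finset.mem_range.mpr (Nat.lt_succ_of_le h))

lemma runMax_zero (V : ℕ → ℝ) : runMax V 0 = V 0 := by
  simp [runMax]

lemma runMax_succ (V : ℕ → ℝ) (k : ℕ) :
    runMax V (k+1) = max (V (k+1)) (runMax V k) := by
  apply le_antisymm
  · apply Finset.sup'_le
    intro i hi
    rcases Nat.lt_succ_iff_lt_or_eq.mp (Finset.mem_range.mp hi) with h | h
    · exact le_trans (le_runMax V (Nat.lt_succ_iff.mp h)) (le_max_right _ _)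
    · exact h ▸ le_max_left _ _
  · exact max_le (le_runMax V le_rfl)
      (Finset.sup'_le _ _ fun i hi =>
        le_runMax V (Nat.le_succ_of_le (Nat.lt_succ_iff.mp (Finset.mem_range.mp hi))))

lemma drawdown_le_iff {V : ℕ → ℝ} {k : ℕ} {d : ℝ} (hm : 0 < runMax V k) :
    drawdown V k ≤ d ↔ (1 - d) * runMax V k ≤ V k := by
  unfold drawdown
  rw [div_le_iff₀ hm]
  constructor <;> intro <;> nlinarith

lemma modFn_mul (dmax : ℝ) {V : ℕ → ℝ} {k : ℕ} (hm : 0 < runMax V k)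
    (hV : 0 < V k) :
    modFn dmax V k * V k = V k - (1 - dmax) * runMax V k := by
  unfold modFn drawdown
  have h1 : 1 - (runMax V k - V k) / runMax V k = V k / runMax V k := by
    field_simp
    ring
  rw [h1]
  field_simp
  ring

lemma wealth_congr (V0 : ℝ) (rf : ℕ → ℝ) (π : (k : ℕ) → (Fin k → ℝ) → ℝ)
    {X Y : ℕ → ℝ} : ∀ k, (∀ i < k, X i = Y i) →
    wealth V0 rf π X k = wealth V0 rf π Y k := by
  intro k
  induction k with
  | zero => intro _; rfl
  | succ k ih =>
    intro h
    have h1 : wealth V0 rf π X k = wealth V0 rf π Y k :=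
      ih (fun i hi => h i (hi.trans (Nat.lt_succ_self k)))
    have h2 : (fun i : Fin k => X i) = fun i : Fin k => Y i :=
      funext fun i => h i (i.2.trans (Nat.lt_succ_self k))
    simp only [wealth, h1, h2, h k (Nat.lt_succ_self k)]

lemma runMax_congr {V W : ℕ → ℝ} {k : ℕ} (h : ∀ i ≤ k, V i = W i) :
    runMax V k = runMax W k := by
  unfold runMax
  exact Finset.sup'_congr _ rfl (fun i hi => h i (Nat.lt_succ_iff.mp (Finset.mem_range.mp hi)))

lemma wealth_succ (V0 : ℝ) (rf : ℕ → ℝ) (π : (k : ℕ) → (Fin k → ℝ) → ℝ)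
    (X : ℕ → ℝ) (k : ℕ) :
    wealth V0 rf π X (k+1) =
      wealth V0 rf π X k + π k (fun i => X i) * X k +
        (wealth V0 rf π X k - π k (fun i => X i)) * rf k := by
  simp only [wealth]

set_option maxHeartbeats 1600000 in
/-- Drawdown Modulation Lemma: a causal policy guarantees
`d(k) ≤ d_max` for all `0 ≤ k ≤ N` along every return sequence in
`[X_min, X_max]^N` if and only if it satisfies the modulation bounds at every
stage along every return sequence. -/
theorem drawdown_modulation_lemma
    (dmax Xmin Xmax : ℝ)
    (hdmax0 : 0 < dmax) (hdmax1 : dmax < 1)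
    (hXmin1 : -1 < Xmin) (hXmin0 : Xmin < 0) (hXmax : 0 < Xmax)
    (N : ℕ) (hN : 0 < N)
    (rf : ℕ → ℝ) (hrf : ∀ k < N, 0 ≤ rf k ∧ rf k < Xmax)
    (V0 : ℝ) (hV0 : 0 < V0)
    (π : (k : ℕ) → (Fin k → ℝ) → ℝ) :
    (∀ X : ℕ → ℝ, (∀ k < N, Xmin ≤ X k ∧ X k ≤ Xmax) →
        ∀ k ≤ N, drawdown (wealth V0 rf π X) k ≤ dmax) ↔
    (∀ X : ℕ → ℝ, (∀ k < N, Xmin ≤ X k ∧ X k ≤ Xmax) →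
        ∀ k < N,
          -((modFn dmax (wealth V0 rf π X) k + rf k) / (Xmax - rf k)) *
              wealth V0 rf π X k ≤ π k (fun i => X i) ∧
          π k (fun i => X i) ≤
            ((modFn dmax (wealth V0 rf π X) k + rf k) / (|Xmin| + rf k)) *
              wealth V0 rf π X k) := by
  have habs : |Xmin| = -Xmin := abs_of_neg hXmin0
  have habs0 : 0 < |Xmin| := by rw [habs]; linarith
  constructor
  · -- drawdown guarantee ⟹ modulation bounds
    intro h X hX k hk
    set W := wealth V0 rf π X with hW
    have hm0 : 0 < runMax W k :=
      lt_of_lt_of_le hV0 (le_runMax W (Nat.zero_le k))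
    have hd : (1 - dmax) * runMax W k ≤ W k :=
      (drawdown_le_iff hm0).mp (h X hX k hk.le)
    have hVpos : 0 < W k := lt_of_lt_of_le (by nlinarith) hd
    have hPV : (modFn dmax W k + rf k) * W k
        = W k - (1 - dmax) * runMax W k + rf k * W k := by
      rw [add_mul, modFn_mul dmax hm0 hVpos]
    have hrfk := hrf k hk
    have hXr : 0 < Xmax - rf k := by linarith [hrfk.2]
    have hXm : 0 < |Xmin| + rf k := by linarith [hrfk.1]
    -- generic: modify X at position k
    have key : ∀ x : ℝ, Xmin ≤ x → x ≤ Xmax →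
        (1 - dmax) * runMax W k ≤
          W k + π k (fun i => X i) * x + (W k - π k (fun i => X i)) * rf k := by
      intro x hx1 hx2
      set Y : ℕ → ℝ := fun j => if j = k then x else X j with hYdef
      have hagree : ∀ i < k, Y i = X i := by
        intro i hi; simp [hYdef, Nat.ne_of_lt hi]
      have hWY : ∀ i ≤ k, wealth V0 rf π Y i = W i := by
        intro i hi
        exact wealth_congr V0 rf π i (fun j hj => hagree j (lt_of_lt_of_le hj hi))
      have hYrange : ∀ j < N, Xmin ≤ Y j ∧ Y j ≤ Xmax := by
        intro j hj
        by_cases hjk : j = k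
        · simp [hYdef, hjk]; exact ⟨hx1, hx2⟩
        · simp [hYdef, hjk]; exact hX j hj
      have hπY : π k (fun i => Y i) = π k (fun i => X i) := by
        congr 1; exact funext fun i => hagree i i.2
      have hrm : runMax (wealth V0 rf π Y) k = runMax W k := runMax_congr hWY
      have hsucc : wealth V0 rf π Y (k+1)
          = W k + π k (fun i => X i) * x + (W k - π k (fun i => X i)) * rf k := by
        simp only [wealth, hπY, hWY k le_rfl]
        have : Y k = x := by simp [hYdef]
        rw [this]
      have hm1 : 0 < runMax (wealth V0 rf π Y) (k+1) :=
        lt_of_lt_of_le hV0 (le_runMax (wealth V0 rf π Y) (Nat.zero_le (k+1)))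
      have hd1 : (1 - dmax) * runMax (wealth V0 rf π Y) (k+1)
          ≤ wealth V0 rf π Y (k+1) :=
        (drawdown_le_iff hm1).mp (h Y hYrange (k+1) hk)
      have hmono : runMax W k ≤ runMax (wealth V0 rf π Y) (k+1) := by
        rw [runMax_succ, hrm]; exact le_max_right _ _
      have : (1 - dmax) * runMax W k ≤ wealth V0 rf π Y (k+1) := by
        nlinarith
      rwa [hsucc] at this
    constructor
    · -- lower bound, from x = Xmax
      have h1 := key Xmax (le_of_lt (lt_trans hXmin0 hXmax)) le_rfl
      rw [neg_mul, div_mul_eq_mul_div, neg_le, le_div_iff₀ hXr]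
      nlinarith [h1, hPV]
    · -- upper bound, from x = Xmin
      have h1 := key Xmin le_rfl (le_of_lt (lt_trans hXmin0 hXmax))
      rw [div_mul_eq_mul_div, le_div_iff₀ hXm, habs]
      nlinarith [h1, hPV]
  · -- modulation bounds ⟹ drawdown guarantee
    intro h X hX
    set W := wealth V0 rf π X with hW
    have key : ∀ k ≤ N, (1 - dmax) * runMax W k ≤ W k := by
      intro k
      induction k with
      | zero =>
        intro _
        rw [runMax_zero]
        have : W 0 = V0 := rfl
        rw [this]; nlinarith
      | succ k ih =>
        intro hk1
        have hkN : k < N := Nat.lt_of_succ_le hk1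
        have ihk := ih hkN.le
        have hm0 : 0 < runMax W k :=
          lt_of_lt_of_le hV0 (le_runMax W (Nat.zero_le k))
        have hVpos : 0 < W k := lt_of_lt_of_le (by nlinarith) ihk
        have hPV : (modFn dmax W k + rf k) * W k
            = W k - (1 - dmax) * runMax W k + rf k * W k := by
          rw [add_mul, modFn_mul dmax hm0 hVpos]
        have hrfk := hrf k hkN
        have hXr : 0 < Xmax - rf k := by linarith [hrfk.2]
        have hXm : 0 < |Xmin| + rf k := by linarith [hrfk.1]
        obtain ⟨hlb, hub⟩ := h X hX k hkN
        rw [← hW] at hlb hub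
        set u := π k (fun i => X i) with hu
        set P := modFn dmax W k + rf k with hP
        have hPV0 : 0 ≤ P * W k := by nlinarith [hPV, hrfk.1]
        have hlb' : -(P * W k) ≤ u * (Xmax - rf k) := by
          rw [neg_mul, div_mul_eq_mul_div, neg_le, le_div_iff₀ hXr] at hlb
          linarith
        have hub' : u * (|Xmin| + rf k) ≤ P * W k :=
          (le_div_iff₀ hXm).mp (by rw [div_mul_eq_mul_div] at hub; exact hub)
        have hXk := hX k hkN
        have hcore : -(P * W k) ≤ u * (X k - rf k) := by
          rcases le_or_gt 0 u with hu0 | hu0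
          · have h2 : u * (Xmin - rf k) ≤ u * (X k - rf k) :=
              mul_le_mul_of_nonneg_left (by linarith [hXk.1]) hu0
            have h3 : u * (Xmin - rf k) = -(u * (|Xmin| + rf k)) := by
              rw [habs]; ring
            linarith
          · have h2 : u * (Xmax - rf k) ≤ u * (X k - rf k) :=
              mul_le_mul_of_nonpos_left (by linarith [hXk.2]) hu0.le
            linarith
        have hstep : (1 - dmax) * runMax W k ≤ W (k+1) := by
          have : W (k+1) = W k + u * X k + (W k - u) * rf k := by
            rw [hW, hu]; exact wealth_succ V0 rf π X k
          rw [this]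
          linarith [hcore, hPV]
        rw [runMax_succ]
        rcases max_cases (W (k+1)) (runMax W k) with ⟨heq, hle⟩ | ⟨heq, hle⟩
        · rw [heq]
          have hW1 : 0 < W (k+1) :=
            lt_of_lt_of_le (mul_pos (by linarith) hm0) hstep
          nlinarith [hW1]
        · rw [heq]; exact hstep
    intro k hk
    have hm0 : 0 < runMax W k :=
      lt_of_lt_of_le hV0 (le_runMax W (Nat.zero_le k))
    exact (drawdown_le_iff hm0).mpr (key k hk)
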